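/- arXiv:1209.2391 — 3 statements merged into one kernel-verified Lean document; each statement's English description precedes it below -/
import Mathlib

section
/- Let T be a fully-resolved X-tree with a proper edge-weighting w, let g be a stable transversal for the collection 2^X of all nonempty subsets of X. For each cluster A ∈ clus(T), let e be the edge of T inducing the split A | (X − A), and let A_w ⊆ A be the set of leaves in A whose weighted path distance in T to e is maximal. Then the function f defined on clus(T) by f(A) := g(A_w) is a stable transversal for clus(T). -/
open SimpleGraph

/-- An `X`-tree: a finite tree whose leaf set is (the image of) `X`,
with no vertices of degree 2. -/
structure XTree (α : Type) (X : Set α) where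
  V : Type
  fintypeV : Fintype V
  tree : SimpleGraph V
  isTree : tree.IsTree
  ι : α → V
  ι_injOn : Set.InjOn ι X
  leaf_iff : ∀ v : V, (tree.neighborSet v).ncard = 1 ↔ v ∈ ι '' X
  no_deg_two : ∀ v : V, (tree.neighborSet v).ncard ≠ 2

namespace XTree

variable {α : Type} {X : Set α}

/-- A vertex is interior if it is not a leaf. -/
def IsInterior (T : XTree α X) (v : T.V) : Prop := v ∉ T.ι '' X

/-- Fully-resolved: every interior vertex has degree 3. -/
def IsFullyResolved (T : XTree α X) : Prop :=
  ∀ v : T.V, T.IsInterior v → (T.tree.neighborSet v).ncard = 3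

/-- The unique path between two vertices of the tree. -/
noncomputable def treePath (T : XTree α X) (u v : T.V) : T.tree.Walk u v :=
  (T.isTree.existsUnique_path u v).exists.choose

lemma treePath_isPath (T : XTree α X) (u v : T.V) : (T.treePath u v).IsPath :=
  (T.isTree.existsUnique_path u v).exists.choose_spec

/-- Weighted path distance between two vertices. -/
noncomputable def pathDist (T : XTree α X) (w : Sym2 T.V → ℝ) (u v : T.V) : ℝ :=
  ((T.treePath u v).edges.map w).sum

lemma treePath_symm (T : XTree α X) (u v : T.V) :
    T.treePath u v = (T.treePath v u).reverse :=
  (T.isTree.existsUnique_path u v).unique (T.treePath_isPath u v)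
    ((T.treePath_isPath v u).reverse)

lemma pathDist_symm (T : XTree α X) (w : Sym2 T.V → ℝ) (u v : T.V) :
    T.pathDist w u v = T.pathDist w v u := by
  unfold pathDist
  rw [treePath_symm, SimpleGraph.Walk.edges_reverse, List.map_reverse, List.sum_reverse]

/-- The induced distance on pairs of leaf labels. -/
noncomputable def cordDist (T : XTree α X) (w : Sym2 T.V → ℝ) : Sym2 α → ℝ :=
  Sym2.lift ⟨fun a b => T.pathDist w (T.ι a) (T.ι b),
    fun a b => T.pathDist_symm w (T.ι a) (T.ι b)⟩

/-- An edge-weighting assigns a nonnegative weight to every edge. -/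
def IsEdgeWeighting (T : XTree α X) (w : Sym2 T.V → ℝ) : Prop :=
  ∀ e ∈ T.tree.edgeSet, 0 ≤ w e

/-- A proper edge-weighting gives positive weight to every interior edge
(i.e. every edge not incident with a leaf). -/
def IsProperWeighting (T : XTree α X) (w : Sym2 T.V → ℝ) : Prop :=
  T.IsEdgeWeighting w ∧ ∀ e ∈ T.tree.edgeSet, (∀ v ∈ e, T.IsInterior v) → 0 < w e

/-- The set of cords (2-element subsets) of `X`. -/
def cords (X : Set α) : Set (Sym2 α) := {c | ¬ c.IsDiag ∧ ∀ a ∈ c, a ∈ X}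

/-- Two weighted trees are `L`-isometric if their leaf distances agree on `L`. -/
def LIsometric (T : XTree α X) (w : Sym2 T.V → ℝ) (T' : XTree α X) (w' : Sym2 T'.V → ℝ)
    (L : Set (Sym2 α)) : Prop :=
  ∀ c ∈ L, T.cordDist w c = T'.cordDist w' c

/-- `L` is an edge-weight lasso for `T`. -/
def IsEdgeWeightLasso (T : XTree α X) (L : Set (Sym2 α)) : Prop :=
  ∀ w w' : Sym2 T.V → ℝ, T.IsProperWeighting w → T.IsProperWeighting w' →
    LIsometric T w T w' L → ∀ e ∈ T.tree.edgeSet, w e = w' e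

/-- Two `X`-trees are equivalent if there is a graph isomorphism fixing `X`. -/
def Equivalent (T T' : XTree α X) : Prop :=
  ∃ φ : T.tree ≃g T'.tree, ∀ a ∈ X, φ (T.ι a) = T'.ι a

/-- `L` is a topological lasso for `T`. -/
def IsTopologicalLasso (T : XTree α X) (L : Set (Sym2 α)) : Prop :=
  ∀ (T' : XTree α X) (w : Sym2 T.V → ℝ) (w' : Sym2 T'.V → ℝ),
    T.IsProperWeighting w → T'.IsProperWeighting w' →
    LIsometric T w T' w' L → Equivalent T T'

/-- `L` is a strong lasso for `T`. -/
def IsStrongLasso (T : XTree α X) (L : Set (Sym2 α)) : Prop :=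
  IsEdgeWeightLasso T L ∧ IsTopologicalLasso T L

/-- The set of leaf labels on the side of edge `e` containing endpoint `u`. -/
def sideSet (T : XTree α X) (e : Sym2 T.V) (u : T.V) : Set α :=
  {a | a ∈ X ∧ (T.tree.deleteEdges {e}).Reachable (T.ι a) u}

/-- The clusters of `T`: leaf sets of the two components of `T - e`, over all edges `e`. -/
def clus (T : XTree α X) : Set (Set α) :=
  {A | ∃ e ∈ T.tree.edgeSet, ∃ u ∈ e, A = T.sideSet e u}

/-- A stable transversal for a collection of subsets of `α`. -/
def IsStableTransversal (C : Set (Set α)) (f : Set α → α) : Prop :=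
  (∀ A ∈ C, f A ∈ A) ∧ ∀ A ∈ C, ∀ B ∈ C, f A ∈ B → B ⊆ A → f A = f B

/-- Leaf labels of the component of `T - v` containing the vertex `u`. -/
def compSet (T : XTree α X) (v u : T.V) : Set α :=
  {a | a ∈ X ∧ ∃ p : T.tree.Walk (T.ι a) u, v ∉ p.support}

/-- The triplet cover `L_{(T,f)}` generated by a transversal `f`. -/
def tripletCoverOf (T : XTree α X) (f : Set α → α) : Set (Sym2 α) :=
  {c | ∃ v u₁ u₂ : T.V, T.IsInterior v ∧ T.tree.Adj v u₁ ∧ T.tree.Adj v u₂ ∧ u₁ ≠ u₂ ∧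
    c = s(f (T.compSet v u₁), f (T.compSet v u₂))}

/-- `L` is a stable triplet cover of `T`. -/
def IsStableTripletCover (T : XTree α X) (L : Set (Sym2 α)) : Prop :=
  ∃ f : Set α → α, IsStableTransversal (clus T) f ∧ L = tripletCoverOf T f

/-- `T|{a,b,c,d}` is the quartet tree `ab||cd`: the four leaves are distinct members
of `X` and the path from `a` to `b` is vertex-disjoint from the path from `c` to `d`. -/
def Quartet (T : XTree α X) (a b c d : α) : Prop :=
  a ∈ X ∧ b ∈ X ∧ c ∈ X ∧ d ∈ X ∧ List.Pairwise (· ≠ ·) [a, b, c, d] ∧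
  ∀ (p : T.tree.Walk (T.ι a) (T.ι b)) (q : T.tree.Walk (T.ι c) (T.ι d)),
    p.IsPath → q.IsPath → ∀ v, v ∈ p.support → v ∉ q.support

/-- The cord `c` admits pivots relative to already-available cords `L ∪ earlier`. -/
def HasPivots (T : XTree α X) (L : Set (Sym2 α)) (earlier : List (Sym2 α))
    (c : Sym2 α) : Prop :=
  ∃ a b p q : α, c = s(a, b) ∧ Quartet T a p q b ∧
    ∀ c' ∈ [s(a, p), s(a, q), s(b, p), s(b, q), s(p, q)], c' ∈ L ∨ c' ∈ earlier

/-- `ord` is a shellable ordering of `cords X - L` with respect to `T`. -/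
def IsShellableOrdering (T : XTree α X) (L : Set (Sym2 α)) (ord : List (Sym2 α)) : Prop :=
  ord.Nodup ∧ (∀ c, c ∈ ord ↔ c ∈ cords X \ L) ∧
  ∀ i (h : i < ord.length), HasPivots T L (ord.take i) (ord.get ⟨i, h⟩)

/-- `L` is a shellable lasso for `T`: `L ⊆ cords X`, every element of `X` occurs in some
cord of `L`, and `cords X - L` admits a shellable ordering. -/
def IsShellableLasso (T : XTree α X) (L : Set (Sym2 α)) : Prop :=
  L ⊆ cords X ∧ (∀ a ∈ X, ∃ c ∈ L, a ∈ c) ∧ ∃ ord, IsShellableOrdering T L ord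

/-- The graph `(Xs, L)` is a 2d-tree. -/
def Is2dTree (Xs : Set α) (L : Set (Sym2 α)) : Prop :=
  ∃ ord : List α, ord.Nodup ∧ (∀ a, a ∈ ord ↔ a ∈ Xs) ∧
    ∃ h2 : 2 ≤ ord.length,
      s(ord.get ⟨0, by omega⟩, ord.get ⟨1, by omega⟩) ∈ L ∧
      ∀ i (h : i < ord.length), 2 ≤ i →
        {b | b ∈ ord.take i ∧ s(ord.get ⟨i, h⟩, b) ∈ L}.ncard = 2

/-- Leaves `x` and `y` form a cherry of `T`. -/
def IsCherry (T : XTree α X) (x y : α) : Prop :=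
  x ≠ y ∧ x ∈ X ∧ y ∈ X ∧ ∃ v : T.V, T.tree.Adj (T.ι x) v ∧ T.tree.Adj (T.ι y) v

/-- `T'` is (equivalent to) the restriction `T|Y` of `T` to `Y ⊆ X`, characterized by the
fact that the clusters of `T|Y` are exactly the nonempty proper restrictions to `Y`
of clusters of `T`. -/
def IsRestrictionOf {Y : Set α} (T' : XTree α Y) (T : XTree α X) : Prop :=
  Y ⊆ X ∧ clus T' = {A | (∃ B ∈ clus T, A = B ∩ Y) ∧ A.Nonempty ∧ A ≠ Y}

open Classical in
/-- One application of the extension rule (R), acting on a state consisting of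
the current set of cords together with the current distance values. -/
def RStep (Xs : Set α) (S S' : Set (Sym2 α) × (Sym2 α → ℝ)) : Prop :=
  ∃ x y u z : α, x ∈ Xs ∧ y ∈ Xs ∧ u ∈ Xs ∧ z ∈ Xs ∧
    List.Pairwise (· ≠ ·) [x, y, u, z] ∧
    s(x, y) ∈ S.1 ∧ s(y, u) ∈ S.1 ∧ s(y, z) ∈ S.1 ∧ s(x, u) ∈ S.1 ∧ s(u, z) ∈ S.1 ∧
    s(x, z) ∉ S.1 ∧
    S.2 s(x, y) + S.2 s(u, z) < S.2 s(x, u) + S.2 s(y, z) ∧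
    S'.1 = insert s(x, z) S.1 ∧
    S'.2 = Function.update S.2 s(x, z) (S.2 s(x, u) + S.2 s(y, z) - S.2 s(y, u))

/-- `S` is the result `cl_R(L)` (with its `d`-values) of exhaustively applying rule (R)
starting from `L` with initial distance values `d`. -/
def IsRClosureOf (Xs : Set α) (L : Set (Sym2 α)) (d : Sym2 α → ℝ)
    (S : Set (Sym2 α) × (Sym2 α → ℝ)) : Prop :=
  Relation.ReflTransGen (RStep Xs) (L, d) S ∧ ∀ S', ¬ RStep Xs S S'

/-! ### Auxiliary lemmas -/

lemma mem_sideSet (T : XTree α X) {e : Sym2 T.V} {u : T.V} {a : α} :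
    a ∈ T.sideSet e u ↔ a ∈ X ∧ (T.tree.deleteEdges {e}).Reachable (T.ι a) u :=
  Iff.rfl

lemma pathDist_eq_of_isPath (T : XTree α X) (w : Sym2 T.V → ℝ) {u v : T.V}
    {p : T.tree.Walk u v} (hp : p.IsPath) :
    T.pathDist w u v = (p.edges.map w).sum := by
  have h : T.treePath u v = p :=
    (T.isTree.existsUnique_path u v).unique (T.treePath_isPath u v) hp
  rw [pathDist, h]

lemma pathDist_add_of_mem_support (T : XTree α X) (w : Sym2 T.V → ℝ) {x z y : T.V}
    (hy : y ∈ (T.treePath x z).support) :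
    T.pathDist w x z = T.pathDist w x y + T.pathDist w y z := by
  classical
  have hp := T.treePath_isPath x z
  have e1 := T.pathDist_eq_of_isPath w (hp.takeUntil hy)
  have e2 := T.pathDist_eq_of_isPath w (hp.dropUntil hy)
  have hsplit : (((T.treePath x z).takeUntil y hy).append
      ((T.treePath x z).dropUntil y hy)).edges = (T.treePath x z).edges := by
    rw [Walk.take_spec]
  rw [e1, e2, pathDist, ← hsplit, Walk.edges_append, List.map_append, List.sum_append]

lemma not_reachable_delete (T : XTree α X) {u v : T.V} (h : T.tree.Adj u v) :
    ¬ (T.tree.deleteEdges {s(u, v)}).Reachable u v := by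
  have hb := isAcyclic_iff_forall_edge_isBridge.mp T.isTree.IsAcyclic
    (show s(u, v) ∈ T.tree.edgeSet from T.tree.mem_edgeSet.mpr h)
  exact isBridge_iff.mp hb

lemma reachable_side_aux (T : XTree α X) (u' v' : T.V) {x y : T.V} (p : T.tree.Walk x y) :
    (T.tree.deleteEdges {s(u', v')}).Reachable x y ∨
    (T.tree.deleteEdges {s(u', v')}).Reachable x u' ∨
    (T.tree.deleteEdges {s(u', v')}).Reachable x v' := by
  induction p with
  | nil => exact Or.inl (Reachable.refl _)
  | cons h q ih =>
    rename_i a b c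
    by_cases he : s(a, b) = s(u', v')
    · rw [Sym2.eq_iff] at he
      rcases he with ⟨rfl, rfl⟩ | ⟨rfl, rfl⟩
      · exact Or.inr (Or.inl (Reachable.refl _))
      · exact Or.inr (Or.inr (Reachable.refl _))
    · have hadj : (T.tree.deleteEdges {s(u', v')}).Adj a b := by
        rw [deleteEdges_adj]
        exact ⟨h, by simpa using he⟩
      rcases ih with h' | h' | h'
      · exact Or.inl (hadj.reachable.trans h')
      · exact Or.inr (Or.inl (hadj.reachable.trans h'))
      · exact Or.inr (Or.inr (hadj.reachable.trans h'))

lemma reachable_side (T : XTree α X) (u' v' : T.V) (x : T.V) :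
    (T.tree.deleteEdges {s(u', v')}).Reachable x u' ∨
    (T.tree.deleteEdges {s(u', v')}).Reachable x v' := by
  obtain ⟨p⟩ := T.isTree.isConnected.preconnected x u'
  rcases T.reachable_side_aux u' v' p with h | h | h
  · exact Or.inl h
  · exact Or.inl h
  · exact Or.inr h

lemma reachable_trans_delete (T : XTree α X) {e : Sym2 T.V} {u' v' : T.V}
    {x y : T.V} (hxy : (T.tree.deleteEdges {e}).Reachable x y)
    (hu' : ¬ (T.tree.deleteEdges {e}).Reachable u' y) :
    (T.tree.deleteEdges {s(u', v')}).Reachable x y := by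
  classical
  obtain ⟨p⟩ := hxy
  have hne : s(u', v') ∉ p.edges := fun hmem =>
    hu' ⟨p.dropUntil u' (p.fst_mem_support_of_mem_edges hmem)⟩
  refine ⟨Walk.transfer p _ fun f hf => ?_⟩
  have hf' := p.edges_subset_edgeSet hf
  rw [edgeSet_deleteEdges] at hf' ⊢
  exact ⟨hf'.1, fun hh => hne (Set.mem_singleton_iff.mp hh ▸ hf)⟩

lemma start_edge_unique {V : Type} {G : SimpleGraph V} {z b : V} (r : G.Walk z b)
    (hr : r.IsPath) {y₁ y₂ : V} (h1 : s(z, y₁) ∈ r.edges) (h2 : s(z, y₂) ∈ r.edges) :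
    y₁ = y₂ := by
  cases r with
  | nil => simp at h1
  | cons h q =>
    rename_i c
    rw [Walk.cons_isPath_iff] at hr
    have key : ∀ y, s(z, y) ∈ (Walk.cons h q).edges → y = c := by
      intro y hy
      rw [Walk.edges_cons, List.mem_cons] at hy
      rcases hy with hy | hy
      · rw [Sym2.eq_iff] at hy
        rcases hy with ⟨-, rfl⟩ | ⟨rfl, rfl⟩
        · rfl
        · exact absurd h (G.loopless.irrefl _)
      · exact absurd (q.fst_mem_support_of_mem_edges hy) hr.2
    rw [key y₁ h1, key y₂ h2]

lemma exists_leaf_side (T : XTree α X) (hfin : X.Finite) (hcard : 3 ≤ X.ncard)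
    {u v : T.V} (huv : T.tree.Adj u v) :
    ∃ a ∈ X, (T.tree.deleteEdges {s(u, v)}).Reachable (T.ι a) u := by
  classical
  haveI := T.fintypeV
  set G' := T.tree.deleteEdges {s(u, v)} with hG'
  have hac : G'.IsAcyclic := fun z c hc =>
    T.isTree.IsAcyclic (c.mapLe (deleteEdges_le _)) (hc.mapLe _)
  let P : ℕ → Prop := fun n => ∃ z : T.V, ∃ p : G'.Walk u z, p.IsPath ∧ p.length = n
  have hP0 : P 0 := ⟨u, Walk.nil, by simp, rfl⟩
  set N := Nat.findGreatest P (Fintype.card T.V) with hN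
  obtain ⟨z, p, hp, hplen⟩ : P N := Nat.findGreatest_spec (Nat.zero_le _) hP0
  -- no neighbor of `z` lies outside the support of `p`
  have hnb : ∀ y, G'.Adj z y → y ∈ p.support := by
    intro y hzy
    by_contra hy
    have hcp : (p.concat hzy).IsPath := by
      rw [← Walk.reverse_reverse (p.concat hzy)]
      apply Walk.IsPath.reverse
      rw [Walk.concat_eq_append, Walk.reverse_append]
      simp only [Walk.reverse_cons, Walk.reverse_nil, Walk.nil_append, Walk.cons_append]
      exact hp.reverse.cons (by simpa [Walk.support_reverse] using hy)
    have hlc : (p.concat hzy).length = N + 1 := by rw [Walk.length_concat, hplen]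
    have hlt : N + 1 ≤ Fintype.card T.V := hlc ▸ le_of_lt hcp.length_lt
    have h2 : N + 1 ≤ N := Nat.le_findGreatest hlt ⟨y, p.concat hzy, hcp, hlc⟩
    omega
  have huniq : ∀ y₁ y₂, G'.Adj z y₁ → G'.Adj z y₂ → y₁ = y₂ := by
    have key : ∀ y, G'.Adj z y → s(z, y) ∈ p.edges := by
      intro y hzy
      have hy := hnb y hzy
      have hq : (p.dropUntil y hy).IsPath := hp.dropUntil hy
      have hnc : ¬ (Walk.cons hzy (p.dropUntil y hy)).IsCycle := hac _
      rw [Walk.cons_isCycle_iff] at hnc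
      push_neg at hnc
      exact p.edges_dropUntil_subset hy (hnc hq)
    intro y₁ y₂ h1 h2
    have e1 : s(z, y₁) ∈ p.reverse.edges := by
      rw [Walk.edges_reverse, List.mem_reverse]; exact key _ h1
    have e2 : s(z, y₂) ∈ p.reverse.edges := by
      rw [Walk.edges_reverse, List.mem_reverse]; exact key _ h2
    exact start_edge_unique p.reverse hp.reverse e1 e2
  have hzv : z ≠ v := by
    rintro rfl
    exact T.not_reachable_delete huv ⟨p⟩
  have hsub : T.tree.neighborSet z ⊆ insert v (G'.neighborSet z) := by
    intro y hy
    by_cases hedge : s(z, y) = s(u, v)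
    · rw [Sym2.eq_iff] at hedge
      rcases hedge with ⟨rfl, rfl⟩ | ⟨rfl, rfl⟩
      · exact Set.mem_insert _ _
      · exact absurd rfl hzv
    · refine Set.mem_insert_iff.mpr (Or.inr ?_)
      show G'.Adj z y
      rw [hG', deleteEdges_adj]
      exact ⟨hy, by simpa using hedge⟩
  have hss : (G'.neighborSet z).ncard ≤ 1 := by
    rw [Set.ncard_le_one (Set.toFinite _)]
    intro a ha b hb
    exact huniq a b ha hb
  have hcard2 : (T.tree.neighborSet z).ncard ≤ 2 := by
    calc (T.tree.neighborSet z).ncard ≤ (insert v (G'.neighborSet z)).ncard :=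
          Set.ncard_le_ncard hsub (Set.toFinite _)
      _ ≤ (G'.neighborSet z).ncard + 1 := Set.ncard_insert_le _ _
      _ ≤ 2 := by omega
  have hpos : 0 < (T.tree.neighborSet z).ncard := by
    rw [Set.ncard_pos (Set.toFinite _)]
    obtain ⟨a, ha⟩ : X.Nonempty := by
      rw [← Set.ncard_pos hfin]; omega
    obtain ⟨b, hb, hba⟩ := Set.exists_ne_of_one_lt_ncard (s := X) (by omega) a
    have hvne : T.ι a ≠ T.ι b := fun hh => hba (T.ι_injOn hb ha hh.symm)
    have hex : ∃ y0 : T.V, y0 ≠ z := by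
      by_cases hza : z = T.ι a
      · exact ⟨T.ι b, by rw [hza]; exact fun hh => hvne hh.symm⟩
      · exact ⟨T.ι a, fun hh => hza hh.symm⟩
    obtain ⟨y0, hy0⟩ := hex
    obtain ⟨q⟩ := T.isTree.isConnected.preconnected z y0
    cases q with
    | nil => exact absurd rfl hy0
    | cons hadj _ => exact ⟨_, hadj⟩
  have hdeg : (T.tree.neighborSet z).ncard = 1 := by
    have := T.no_deg_two z; omega
  obtain ⟨a, haX, haz⟩ := (T.leaf_iff z).mp hdeg
  exact ⟨a, haX, by rw [haz]; exact ⟨p.reverse⟩⟩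

lemma pathDist_cross (T : XTree α X) (w : Sym2 T.V → ℝ) {u' v' : T.V} (he' : T.tree.Adj u' v')
    {x z : T.V} (hx : (T.tree.deleteEdges {s(u', v')}).Reachable x u')
    (hz : (T.tree.deleteEdges {s(u', v')}).Reachable z v') :
    T.pathDist w x z = T.pathDist w x u' + T.pathDist w u' z := by
  have hbr := T.not_reachable_delete he'
  have hmem : u' ∈ (T.treePath x z).support := by
    by_cases hedge : s(u', v') ∈ (T.treePath x z).edges
    · exact (T.treePath x z).fst_mem_support_of_mem_edges hedge
    · exfalso
      have hreach : (T.tree.deleteEdges {s(u', v')}).Reachable x z :=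
        ⟨(T.treePath x z).toDeleteEdges _ (fun e he hmem' =>
          hedge (Set.mem_singleton_iff.mp hmem' ▸ he))⟩
      exact hbr (hx.symm.trans (hreach.trans hz))
  exact T.pathDist_add_of_mem_support w hmem

end XTree

open XTree in
/-- Let `T` be a fully-resolved `X`-tree with a proper edge-weighting `w`
and `g` a stable transversal for the collection of all nonempty subsets of `X`. If, for
each cluster `A ∈ clus(T)` with inducing edge `e` (whose endpoint on the `A`-side is
`u`), `f(A) = g(A_w)` where `A_w` is the set of leaves of `A` furthest from `e`, then
`f` is a stable transversal for `clus(T)`. -/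
theorem furthest_leaves_stable_transversal {α : Type} (X : Set α) (hfin : X.Finite)
    (hcard : 3 ≤ X.ncard) (T : XTree α X) (hT : T.IsFullyResolved)
    (w : Sym2 T.V → ℝ) (hw : T.IsProperWeighting w)
    (g : Set α → α) (hg : IsStableTransversal {A : Set α | A ⊆ X ∧ A.Nonempty} g)
    (f : Set α → α)
    (hf : ∀ A ∈ clus T, ∀ e ∈ T.tree.edgeSet, ∀ u, u ∈ e → A = T.sideSet e u →
      f A = g {a | a ∈ A ∧ ∀ b ∈ A, T.pathDist w (T.ι b) u ≤ T.pathDist w (T.ι a) u}) :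
    IsStableTransversal (clus T) f := by
  classical
  constructor
  · rintro A ⟨e, he, u, hu, hA⟩
    obtain ⟨v, rfl⟩ := Sym2.mem_iff_exists.mp hu
    have hadj : T.tree.Adj u v := T.tree.mem_edgeSet.mp he
    have hfA := hf A ⟨s(u, v), he, u, hu, hA⟩ s(u, v) he u hu hA
    have hAX : A ⊆ X := fun a ha => ((T.mem_sideSet).mp (hA ▸ ha)).1
    have hAne : A.Nonempty := by
      obtain ⟨a, haX, har⟩ := T.exists_leaf_side hfin hcard hadj
      exact ⟨a, hA.symm ▸ (T.mem_sideSet.mpr ⟨haX, har⟩)⟩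
    obtain ⟨a0, ha0, hmax⟩ := Set.exists_max_image A (fun a => T.pathDist w (T.ι a) u)
      (hfin.subset hAX) hAne
    have hmem := hg.1 {a | a ∈ A ∧ ∀ b ∈ A, T.pathDist w (T.ι b) u ≤ T.pathDist w (T.ι a) u}
      ⟨fun a ha => hAX ha.1, ⟨a0, ha0, hmax⟩⟩
    rw [hfA]
    exact hmem.1
  · rintro A hAc B hBc hfAB hBA
    obtain ⟨e, he, u, hu, hA⟩ := hAc
    obtain ⟨e', he', u', hu', hB⟩ := hBc
    obtain ⟨v, rfl⟩ := Sym2.mem_iff_exists.mp hu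
    obtain ⟨v', rfl⟩ := Sym2.mem_iff_exists.mp hu'
    have hadj : T.tree.Adj u v := T.tree.mem_edgeSet.mp he
    have hadj' : T.tree.Adj u' v' := T.tree.mem_edgeSet.mp he'
    by_cases hABeq : A = B
    · rw [hABeq]
    have hfA := hf A ⟨s(u, v), he, u, hu, hA⟩ s(u, v) he u hu hA
    have hfB := hf B ⟨s(u', v'), he', u', hu', hB⟩ s(u', v') he' u' hu' hB
    have hbr := T.not_reachable_delete hadj
    have hbr' := T.not_reachable_delete hadj'
    -- `u` lies on the `v'`-side of `e'`
    have hside : (T.tree.deleteEdges {s(u', v')}).Reachable u v' := by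
      rcases T.reachable_side u' v' u with hR | hR
      swap
      · exact hR
      exfalso
      by_cases hee : s(u, v) = s(u', v')
      · rw [Sym2.eq_iff] at hee
        rcases hee with ⟨h1, h2⟩ | ⟨h1, h2⟩
        · exact hABeq (by rw [hA, hB, h1, h2])
        · exact hbr' (h1 ▸ hR).symm
      · have hadjvu' : (T.tree.deleteEdges {s(u', v')}).Reachable v u' := by
          have hvadj : (T.tree.deleteEdges {s(u', v')}).Adj v u := by
            rw [deleteEdges_adj]
            refine ⟨hadj.symm, ?_⟩
            rw [Set.mem_singleton_iff]
            intro hh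
            exact hee (by rw [← hh, Sym2.eq_swap])
          exact hvadj.reachable.trans hR
        rcases T.reachable_side u v u' with hR2 | hR2
        · -- `u'` on the `u`-side of `e`: a leaf on the `v`-side gives a contradiction
          obtain ⟨a, haX, har⟩ := T.exists_leaf_side hfin hcard hadj.symm
          rw [show s(v, u) = s(u, v) from Sym2.eq_swap] at har
          have hnu' : ¬ (T.tree.deleteEdges {s(u, v)}).Reachable u' v :=
            fun hh => hbr (hR2.symm.trans hh)
          have hBa : (T.tree.deleteEdges {s(u', v')}).Reachable (T.ι a) v :=
            T.reachable_trans_delete har hnu'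
          have haB : a ∈ B := hB.symm ▸ T.mem_sideSet.mpr ⟨haX, hBa.trans hadjvu'⟩
          have haA : a ∈ A := hBA haB
          have hreach : (T.tree.deleteEdges {s(u, v)}).Reachable (T.ι a) u :=
            (T.mem_sideSet.mp (hA ▸ haA)).2
          exact hbr (hreach.symm.trans har)
        · -- `u'` on the `v`-side of `e`: then `A ⊆ B`, so `A = B`
          apply hABeq
          refine Set.Subset.antisymm (fun a ha => ?_) hBA
          have haA := T.mem_sideSet.mp (hA ▸ ha)
          have hnu : ¬ (T.tree.deleteEdges {s(u, v)}).Reachable u' u :=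
            fun hh => hbr (hh.symm.trans hR2)
          have hreach : (T.tree.deleteEdges {s(u', v')}).Reachable (T.ι a) u :=
            T.reachable_trans_delete haA.2 hnu
          exact hB.symm ▸ T.mem_sideSet.mpr ⟨haA.1, hreach.trans hR⟩
    -- distance decomposition for elements of `B`
    have hdist : ∀ b ∈ B, T.pathDist w (T.ι b) u
        = T.pathDist w (T.ι b) u' + T.pathDist w u' u := by
      intro b hb
      exact T.pathDist_cross w hadj' (T.mem_sideSet.mp (hB ▸ hb)).2 hside
    set Aw := {a | a ∈ A ∧ ∀ b ∈ A, T.pathDist w (T.ι b) u ≤ T.pathDist w (T.ι a) u}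
      with hAwdef
    set Bw := {a | a ∈ B ∧ ∀ b ∈ B, T.pathDist w (T.ι b) u' ≤ T.pathDist w (T.ι a) u'}
      with hBwdef
    have hAX : A ⊆ X := fun a ha => (T.mem_sideSet.mp (hA ▸ ha)).1
    have hBX : B ⊆ X := hBA.trans hAX
    have hAne : A.Nonempty := ⟨f A, hBA hfAB⟩
    obtain ⟨a0, ha0, hmax⟩ := Set.exists_max_image A (fun a => T.pathDist w (T.ι a) u)
      (hfin.subset hAX) hAne
    have hAwne : Aw.Nonempty := ⟨a0, ha0, hmax⟩
    have hAwC : Aw ∈ {A : Set α | A ⊆ X ∧ A.Nonempty} := ⟨fun a ha => hAX ha.1, hAwne⟩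
    have ht : g Aw ∈ Aw := hg.1 Aw hAwC
    have htB : g Aw ∈ B := by rw [hfA] at hfAB; exact hfAB
    have htBw : g Aw ∈ Bw := by
      refine ⟨htB, fun b hb => ?_⟩
      have h1 := hdist b hb
      have h2 := hdist (g Aw) htB
      have h3 := ht.2 b (hBA hb)
      linarith
    have hBwAw : Bw ⊆ Aw := by
      rintro b ⟨hbB, hbmax⟩
      refine ⟨hBA hbB, fun a haA => ?_⟩
      have h1 := hdist b hbB
      have h2 := hdist (g Aw) htB
      have h3 := ht.2 a haA
      have h4 := hbmax (g Aw) htB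
      linarith
    have hBwC : Bw ∈ {A : Set α | A ⊆ X ∧ A.Nonempty} := ⟨fun a ha => hBX ha.1, ⟨_, htBw⟩⟩
    have hgg := hg.2 Aw hAwC Bw hBwC htBw hBwAw
    rw [hfA, hfB, hgg]
end

section
/- If T is a fully-resolved X-tree with n := |X| ≥ 3 and L ⊆ binom(X,2) is an edge-weight lasso for T, then |L| ≥ 2n − 3. -/
open SimpleGraph

section Aux

open XTree

variable {α : Type} {X : Set α}

lemma XTree.pathDist_add' (T : XTree α X) (w w' : Sym2 T.V → ℝ) (u v : T.V) :
    T.pathDist (w + w') u v = T.pathDist w u v + T.pathDist w' u v := by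
  unfold XTree.pathDist
  induction (T.treePath u v).edges with
  | nil => simp
  | cons e l ih => simp only [List.map_cons, List.sum_cons, ih, Pi.add_apply]; ring

lemma XTree.pathDist_smul' (T : XTree α X) (r : ℝ) (w : Sym2 T.V → ℝ) (u v : T.V) :
    T.pathDist (r • w) u v = r * T.pathDist w u v := by
  unfold XTree.pathDist
  induction (T.treePath u v).edges with
  | nil => simp
  | cons e l ih => simp only [List.map_cons, List.sum_cons, ih, Pi.smul_apply,
      smul_eq_mul]; ring

lemma XTree.cordDist_add' (T : XTree α X) (w w' : Sym2 T.V → ℝ) (c : Sym2 α) :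
    T.cordDist (w + w') c = T.cordDist w c + T.cordDist w' c := by
  induction c using Sym2.ind with
  | _ a b => simp [XTree.cordDist, XTree.pathDist_add']

lemma XTree.cordDist_smul' (T : XTree α X) (r : ℝ) (w : Sym2 T.V → ℝ) (c : Sym2 α) :
    T.cordDist (r • w) c = r * T.cordDist w c := by
  induction c using Sym2.ind with
  | _ a b => simp [XTree.cordDist, XTree.pathDist_smul']

lemma XTree.edge_count (T : XTree α X) (hT : T.IsFullyResolved) (hfin : X.Finite)
    (hcard : 3 ≤ X.ncard) :
    T.tree.edgeSet.ncard + 3 = 2 * X.ncard := by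
  classical
  haveI := T.fintypeV
  have hedge : T.tree.edgeFinset.card + 1 = Fintype.card T.V :=
    T.isTree.card_edgeFinset
  have hdeg : ∀ v : T.V, T.tree.degree v = (T.tree.neighborSet v).ncard := by
    intro v
    rw [← SimpleGraph.card_neighborSet_eq_degree, ← Nat.card_eq_fintype_card,
      Nat.card_coe_set_eq]
  have hsum : ∑ v : T.V, T.tree.degree v = 2 * T.tree.edgeFinset.card :=
    SimpleGraph.sum_degrees_eq_twice_card_edges T.tree
  set A : Finset T.V := (T.ι '' X).toFinset with hA
  have hAcard : A.card = X.ncard := by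
    rw [hA, ← Set.ncard_eq_toFinset_card', Set.ncard_image_of_injOn T.ι_injOn]
  have h1 : ∑ v ∈ A, T.tree.degree v = A.card := by
    have hc : ∀ v ∈ A, T.tree.degree v = 1 := by
      intro v hv
      rw [hdeg v]
      exact (T.leaf_iff v).2 (by simpa [hA, Set.mem_toFinset] using hv)
    rw [Finset.sum_congr rfl hc, Finset.sum_const, smul_eq_mul, mul_one]
  have h2 : ∑ v ∈ Aᶜ, T.tree.degree v = Aᶜ.card * 3 := by
    have hc : ∀ v ∈ Aᶜ, T.tree.degree v = 3 := by
      intro v hv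
      rw [hdeg v]
      exact hT v (by simpa [XTree.IsInterior, hA, Set.mem_toFinset] using Finset.mem_compl.1 hv)
    rw [Finset.sum_congr rfl hc, Finset.sum_const, smul_eq_mul]
  have h3 : (∑ v ∈ A, T.tree.degree v) + ∑ v ∈ Aᶜ, T.tree.degree v
      = ∑ v : T.V, T.tree.degree v := Finset.sum_add_sum_compl A _
  have h4 : Aᶜ.card = Fintype.card T.V - A.card := Finset.card_compl A
  have h5 : A.card ≤ Fintype.card T.V := A.card_le_univ
  have hE : T.tree.edgeSet.ncard = T.tree.edgeFinset.card := by
    rw [Set.ncard_eq_toFinset_card']; try rfl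
  rw [h1, h2, hsum] at h3
  omega

end Aux


open XTree in
/-- If `T` is a fully-resolved `X`-tree with `n := |X| ≥ 3` and
`L ⊆ binom(X,2)` is an edge-weight lasso for `T`, then `|L| ≥ 2n - 3`. -/
theorem edgeWeightLasso_card_lower_bound {α : Type} (X : Set α) (hfin : X.Finite)
    (hcard : 3 ≤ X.ncard) (T : XTree α X) (hT : T.IsFullyResolved)
    (L : Set (Sym2 α)) (hLX : L ⊆ cords X) (hlasso : IsEdgeWeightLasso T L) :
    2 * X.ncard - 3 ≤ L.ncard := by
  classical
  haveI := T.fintypeV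
  -- L is finite
  have hLfin : L.Finite := by
    apply Set.Finite.subset (Set.Finite.image (fun p : α × α => s(p.1, p.2)) (hfin.prod hfin))
    intro c hc
    obtain ⟨hd, hm⟩ := hLX hc
    revert hm
    induction c using Sym2.ind with
    | _ a b =>
      intro hm
      exact ⟨(a, b), ⟨hm a (by simp), hm b (by simp)⟩, rfl⟩
  -- the extension-by-zero linear map
  let ext : (↥T.tree.edgeFinset → ℝ) →ₗ[ℝ] (Sym2 T.V → ℝ) :=
    { toFun := fun k e => if h : e ∈ T.tree.edgeSet then
        k ⟨e, by rwa [SimpleGraph.mem_edgeFinset]⟩ else 0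
      map_add' := by
        intro k k'; funext e
        by_cases h : e ∈ T.tree.edgeSet
        · simp only [Pi.add_apply, dif_pos h]
        · simp only [Pi.add_apply, dif_neg h, add_zero]
      map_smul' := by
        intro r k; funext e
        by_cases h : e ∈ T.tree.edgeSet
        · simp only [Pi.smul_apply, dif_pos h, RingHom.id_apply]
        · simp only [Pi.smul_apply, dif_neg h, smul_zero, RingHom.id_apply] }
  -- the distance linear map
  let D : (Sym2 T.V → ℝ) →ₗ[ℝ] (↥hLfin.toFinset → ℝ) :=
    { toFun := fun w c => T.cordDist w c.1
      map_add' := by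
        intro w w'; funext c; exact T.cordDist_add' w w' c.1
      map_smul' := by
        intro r w; funext c; exact T.cordDist_smul' r w c.1 }
  have hinj : Function.Injective (D ∘ₗ ext) := by
    rw [injective_iff_map_eq_zero]
    intro k hk
    set g : Sym2 T.V → ℝ := ext k with hg
    have hzero : ∀ c ∈ L, T.cordDist g c = 0 := by
      intro c hc
      have := congrFun hk ⟨c, hLfin.mem_toFinset.2 hc⟩
      exact this
    set C : ℝ := (∑ e : Sym2 T.V, |g e|) + 1 with hC
    have habs : ∀ e : Sym2 T.V, |g e| ≤ C - 1 := by
      intro e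
      have h1 : |g e| ≤ ∑ e : Sym2 T.V, |g e| :=
        Finset.single_le_sum (fun i _ => abs_nonneg (g i)) (Finset.mem_univ e)
      rw [hC]; linarith
    have hC1 : 1 ≤ C := by
      have : (0:ℝ) ≤ ∑ e : Sym2 T.V, |g e| :=
        Finset.sum_nonneg fun i _ => abs_nonneg (g i)
      rw [hC]; linarith
    have hCpos : ∀ e : Sym2 T.V, 0 < C + g e := by
      intro e
      have h1 := habs e
      have h2 := neg_abs_le (g e)
      linarith
    set w : Sym2 T.V → ℝ := fun _ => C with hw
    set w' : Sym2 T.V → ℝ := fun e => C + g e with hw'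
    have hwp : T.IsProperWeighting w := by
      refine ⟨fun e _ => ?_, fun e _ _ => ?_⟩ <;> · simp only [hw]; linarith
    have hwp' : T.IsProperWeighting w' := by
      refine ⟨fun e _ => ?_, fun e _ _ => ?_⟩ <;>
      · simp only [hw']; have := hCpos e; linarith
    have hweq : w' = w + g := rfl
    have hiso : LIsometric T w T w' L := by
      intro c hc
      rw [hweq, T.cordDist_add', hzero c hc, add_zero]
    have hedges := hlasso w w' hwp hwp' hiso
    funext e
    have he : (e : Sym2 T.V) ∈ T.tree.edgeSet := by
      have := e.2
      rwa [SimpleGraph.mem_edgeFinset] at this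
    have heq := hedges e he
    have hge : g (e : Sym2 T.V) = 0 := by
      simp only [hw, hw'] at heq
      linarith
    have hke : g (e : Sym2 T.V) = k e := by
      simp only [hg, ext, LinearMap.coe_mk, AddHom.coe_mk]
      try rw [dif_pos he]
    rw [Pi.zero_apply, ← hke, hge]
  have hrank := LinearMap.finrank_le_finrank_of_injective hinj
  simp only [Module.finrank_pi, Fintype.card_coe] at hrank
  have hcount := T.edge_count hT hfin hcard
  have hE : T.tree.edgeSet.ncard = T.tree.edgeFinset.card := by
    rw [Set.ncard_eq_toFinset_card']; try rfl
  have hL : L.ncard = hLfin.toFinset.card := Set.ncard_eq_toFinset_card L hLfin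
  omega
end

section
/- Let T be a fully-resolved X-tree with a proper edge-weighting w, and suppose L ⊆ binom(X,2) has the property that for every interior vertex v of T, L contains every cord xy such that x is a leaf at minimum weighted path distance to v in one component of T − v and y is a leaf at minimum weighted path distance to v in another component of T − v. Then L contains a stable triplet cover for T. -/
open SimpleGraph

namespace XTreeAux

open SimpleGraph SimpleGraph.Walk XTree
open scoped Classical

variable {α : Type} {X : Set α} {T : XTree α X}

lemma path_eq (T : XTree α X) {x y : T.V} (p : T.tree.Walk x y) (hp : p.IsPath) :
    p = T.treePath x y :=
  (T.isTree.existsUnique_path x y).unique hp (T.treePath_isPath x y)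

/-- `y` is reachable from `x` avoiding `v`. -/
def Reach (T : XTree α X) (v x y : T.V) : Prop := ∃ p : T.tree.Walk x y, v ∉ p.support

lemma reach_iff {v x y : T.V} : Reach T v x y ↔ v ∉ (T.treePath x y).support := by
  constructor
  · rintro ⟨p, hp⟩
    have h1 : (p.toPath : T.tree.Walk x y) = T.treePath x y :=
      path_eq T _ (p.toPath.2)
    rw [← h1]
    exact fun hmem => hp (p.support_toPath_subset hmem)
  · intro h
    exact ⟨_, h⟩

lemma Reach.symm {v x y : T.V} (h : Reach T v x y) : Reach T v y x := by
  obtain ⟨p, hp⟩ := h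
  exact ⟨p.reverse, by rwa [support_reverse, List.mem_reverse]⟩

lemma Reach.trans {v x y z : T.V} (h : Reach T v x y) (h' : Reach T v y z) :
    Reach T v x z := by
  obtain ⟨p, hp⟩ := h
  obtain ⟨q, hq⟩ := h'
  refine ⟨p.append q, ?_⟩
  rw [support_append]
  intro hmem
  rcases List.mem_append.mp hmem with h1 | h1
  · exact hp h1
  · exact hq (List.mem_of_mem_tail h1)

lemma reach_self {v x : T.V} (h : x ≠ v) : Reach T v x x := by
  refine ⟨Walk.nil, ?_⟩
  simp [Ne.symm h]

lemma Reach.ne_right {v x y : T.V} (h : Reach T v x y) : y ≠ v := by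
  obtain ⟨p, hp⟩ := h
  exact fun he => hp (he ▸ p.end_mem_support)

lemma Reach.ne_left {v x y : T.V} (h : Reach T v x y) : x ≠ v :=
  Reach.ne_right (Reach.symm h)

lemma Reach.adj {v x y t : T.V} (h : Reach T v x y) (ha : T.tree.Adj y t) (ht : t ≠ v) :
    Reach T v x t := by
  have h1 : y ≠ v := Reach.ne_right h
  refine Reach.trans h ⟨Walk.cons ha Walk.nil, ?_⟩
  simp [Ne.symm h1, Ne.symm ht]

lemma mem_compSet {a : α} {v u : T.V} :
    a ∈ T.compSet v u ↔ a ∈ X ∧ Reach T v (T.ι a) u := Iff.rfl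

lemma compSet_subset {v u : T.V} : T.compSet v u ⊆ X := fun _ h => h.1

/-- Splitting a reach through a vertex on the tree path. -/
lemma Reach.split {v x y t : T.V} (h : Reach T v x y)
    (ht : t ∈ (T.treePath x y).support) : Reach T v x t ∧ Reach T v t y := by
  rw [reach_iff] at h
  constructor
  · exact ⟨(T.treePath x y).takeUntil t ht,
      fun hm => h ((T.treePath x y).support_takeUntil_subset ht hm)⟩
  · exact ⟨(T.treePath x y).dropUntil t ht,
      fun hm => h ((T.treePath x y).support_dropUntil_subset ht hm)⟩

/-- The prefix of a path avoids the endpoint. -/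
lemma reach_endpoint {x y t : T.V} (ht : t ∈ (T.treePath x y).support) (hne : t ≠ y) :
    Reach T y x t := by
  set p := T.treePath x y with hp
  refine ⟨p.takeUntil t ht, fun hmem => ?_⟩
  have hnd : p.support.Nodup := (T.treePath_isPath x y).support_nodup
  have hspec := p.take_spec ht
  have hsupp : p.support = (p.takeUntil t ht).support ++ ((p.dropUntil t ht).support).tail := by
    conv_lhs => rw [← hspec]
    exact support_append _ _
  rw [hsupp] at hnd
  have hdisj := List.disjoint_of_nodup_append hnd
  have hy : y ∈ ((p.dropUntil t ht).support).tail := by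
    have h1 : y ∈ (p.dropUntil t ht).support := Walk.end_mem_support _
    rw [support_eq_cons] at h1
    rcases List.mem_cons.mp h1 with h1 | h1
    · exact absurd h1.symm hne
    · exact h1
  exact (hdisj hmem) hy

end XTreeAux
namespace XTreeAux

open SimpleGraph SimpleGraph.Walk XTree
open scoped Classical

variable {α : Type} {X : Set α} {T : XTree α X}

lemma treePath_self (T : XTree α X) (x : T.V) : T.treePath x x = Walk.nil :=
  (path_eq T Walk.nil (Walk.IsPath.nil)).symm

lemma pathDist_self (w : Sym2 T.V → ℝ) (x : T.V) : T.pathDist w x x = 0 := by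
  unfold XTree.pathDist
  rw [treePath_self]
  simp

lemma pathDist_step (w : Sym2 T.V → ℝ) {x u v : T.V} (h : T.tree.Adj u v)
    (hv : v ∉ (T.treePath x u).support) :
    T.pathDist w x v = T.pathDist w x u + w s(u, v) := by
  have hp : ((T.treePath x u).concat h).IsPath := by
    rw [Walk.isPath_def, support_concat, List.nodup_append]
    refine ⟨(T.treePath_isPath x u).support_nodup, List.nodup_singleton v, ?_⟩
    intro t ht b ht' htb
    rw [List.mem_singleton] at ht'
    exact hv (by rw [← ht', ← htb]; exact ht)
  have he := path_eq T _ hp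
  unfold XTree.pathDist
  rw [← he, edges_concat]
  simp

lemma pathDist_split (w : Sym2 T.V → ℝ) {x y t : T.V}
    (ht : t ∈ (T.treePath x y).support) :
    T.pathDist w x y = T.pathDist w x t + T.pathDist w t y := by
  have h1 : (T.treePath x y).takeUntil t ht = T.treePath x t :=
    path_eq T _ ((T.treePath_isPath x y).takeUntil ht)
  have h2 : (T.treePath x y).dropUntil t ht = T.treePath t y :=
    path_eq T _ ((T.treePath_isPath x y).dropUntil ht)
  unfold XTree.pathDist
  rw [← h1, ← h2]
  conv_lhs => rw [← (T.treePath x y).take_spec ht]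
  rw [edges_append, List.map_append, List.sum_append]

/-- Components of `T - v` at distinct neighbors are disjoint. -/
lemma not_reach_sibling {v u u' : T.V} (h : T.tree.Adj v u) (h' : T.tree.Adj v u')
    (hne : u ≠ u') : ¬ Reach T v u u' := by
  intro hr
  rw [reach_iff] at hr
  have hp : (Walk.cons h.symm (Walk.cons h' Walk.nil) : T.tree.Walk u u').IsPath := by
    rw [Walk.isPath_def]
    simp [Walk.support_cons]
    refine ⟨⟨h.ne', hne⟩, h'.ne⟩
  have he := path_eq T _ hp
  apply hr
  rw [← he]
  simp

/-- The only vertex of a component adjacent to the deleted vertex is the root. -/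
lemma eq_of_reach_adj {v u z : T.V} (hvu : T.tree.Adj v u) (hr : Reach T v u z)
    (ha : T.tree.Adj z v) : z = u := by
  have h1 : v ∉ (T.treePath u z).support := reach_iff.mp hr
  have hp1 : (Walk.cons hvu (T.treePath u z)).IsPath := by
    rw [Walk.cons_isPath_iff]
    exact ⟨T.treePath_isPath u z, h1⟩
  have h0 : z ≠ v := Reach.ne_right hr
  have hp2 : (Walk.cons ha.symm Walk.nil : T.tree.Walk v z).IsPath := by
    rw [Walk.isPath_def]
    simp [ha.ne, Ne.symm h0]
  have he : Walk.cons hvu (T.treePath u z) = Walk.cons ha.symm Walk.nil :=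
    (path_eq T _ hp1).trans (path_eq T _ hp2).symm
  have hs := congrArg Walk.support he
  rw [Walk.support_cons, Walk.support_cons, support_eq_cons] at hs
  simp at hs
  have hc := (T.treePath u z).support_eq_cons
  rw [hs] at hc
  simp only [List.tail_cons, List.cons.injEq] at hc
  exact hc.1

/-- Toward any other vertex there is a neighbor through which it is reached. -/
lemma exists_adj_reach {v t : T.V} (h : v ≠ t) : ∃ n, T.tree.Adj v n ∧ Reach T v n t := by
  have hp := T.treePath_isPath v t
  cases hP : T.treePath v t with
  | nil => exact absurd rfl h
  | @cons _ n _ ha q =>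
    rw [hP, Walk.cons_isPath_iff] at hp
    exact ⟨n, ha, q, hp.2⟩

lemma degree_cases (hT : T.IsFullyResolved) (v : T.V) :
    (T.tree.neighborSet v).ncard = 1 ∨ (T.tree.neighborSet v).ncard = 3 := by
  by_cases h : v ∈ T.ι '' X
  · exact Or.inl ((T.leaf_iff v).mpr h)
  · exact Or.inr (hT v h)

lemma exists_other {v u : T.V} (h3 : (T.tree.neighborSet v).ncard = 3)
    (hu : T.tree.Adj v u) : ∃ n, T.tree.Adj v n ∧ n ≠ u := by
  by_contra hc
  push_neg at hc
  have hsub : T.tree.neighborSet v ⊆ {u} := fun n hn => hc n hn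
  have h2 := Set.ncard_le_ncard hsub (Set.finite_singleton u)
  rw [Set.ncard_singleton, h3] at h2
  omega

lemma exists_third {v u m : T.V} (h3 : (T.tree.neighborSet v).ncard = 3) :
    ∃ n, T.tree.Adj v n ∧ n ≠ u ∧ n ≠ m := by
  by_contra hc
  push_neg at hc
  have hsub : T.tree.neighborSet v ⊆ {u, m} := by
    intro n hn
    by_cases hnu : n = u
    · exact Or.inl hnu
    · exact Or.inr (hc n hn hnu)
  have h2 := Set.ncard_le_ncard hsub ((Set.finite_singleton m).insert u)
  have h4 : ({u, m} : Set T.V).ncard ≤ 2 := by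
    have := Set.ncard_insert_le u ({m} : Set T.V)
    rw [Set.ncard_singleton] at this
    omega
  omega

end XTreeAux
namespace XTreeAux

open SimpleGraph SimpleGraph.Walk XTree
open scoped Classical

variable {α : Type} {X : Set α} {T : XTree α X}

lemma isPath_concat {x u y : T.V} {p : T.tree.Walk x u} (hp : p.IsPath)
    (h : T.tree.Adj u y) (hy : y ∉ p.support) : (p.concat h).IsPath := by
  rw [Walk.isPath_def, support_concat, List.nodup_append]
  refine ⟨hp.support_nodup, List.nodup_singleton y, ?_⟩
  intro t ht b ht' htb
  rw [List.mem_singleton] at ht'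
  exact hy (by rw [← ht', ← htb]; exact ht)

lemma end_not_mem_takeUntil {x y t : T.V} (ht : t ∈ (T.treePath x y).support)
    (hne : t ≠ y) : y ∉ ((T.treePath x y).takeUntil t ht).support := by
  set p := T.treePath x y with hp
  intro hmem
  have hnd : p.support.Nodup := (T.treePath_isPath x y).support_nodup
  have hsupp : p.support = (p.takeUntil t ht).support ++ ((p.dropUntil t ht).support).tail := by
    conv_lhs => rw [← p.take_spec ht]
    exact support_append _ _
  rw [hsupp] at hnd
  have hdisj := List.disjoint_of_nodup_append hnd
  have hy : y ∈ ((p.dropUntil t ht).support).tail := by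
    have h1 : y ∈ (p.dropUntil t ht).support := Walk.end_mem_support _
    rw [support_eq_cons] at h1
    rcases List.mem_cons.mp h1 with h1 | h1
    · exact absurd h1.symm hne
    · exact h1
  exact (hdisj hmem) hy

/-- Every component of `T - v` contains a leaf of `X`. -/
lemma compSet_nonempty (hT : T.IsFullyResolved) {v u : T.V} (h : T.tree.Adj v u) :
    ∃ a ∈ X, Reach T v (T.ι a) u := by
  haveI := T.fintypeV
  set S : Set T.V := {z | Reach T v u z} with hS
  have hSfin : S.Finite := Set.toFinite S
  have hSne : S.Nonempty := ⟨u, reach_self h.ne'⟩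
  obtain ⟨z, hz, hmax⟩ := Set.exists_max_image S (fun z => (T.treePath u z).length) hSfin hSne
  have hz' : Reach T v u z := hz
  have hdeg : (T.tree.neighborSet z).ncard = 1 := by
    rcases degree_cases hT z with h1 | h3
    · exact h1
    exfalso
    have hvp : v ∉ (T.treePath u z).support := reach_iff.mp hz'
    -- every neighbor of z lies on the path from u to z
    have claim1 : ∀ y, T.tree.Adj z y → y ∈ (T.treePath u z).support := by
      intro y hy
      by_contra hnot
      by_cases hyv : y = v
      · -- then z = u, contradiction with maximality using another neighbor
        subst hyv
        have hzu : z = u := eq_of_reach_adj h hz' hy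
        obtain ⟨n, hn, hnv⟩ := exists_other h3 hy
        have hnS : n ∈ S := Reach.adj (reach_self h.ne') (hzu ▸ hn) hnv
        have h1 : (Walk.cons (hzu ▸ hn) Walk.nil : T.tree.Walk u n).IsPath := by
          rw [Walk.isPath_def]
          simp [(hzu ▸ hn : T.tree.Adj u n).ne]
        have h2 := path_eq T _ h1
        have h4 := hmax n hnS
        rw [← h2] at h4
        simp only [Walk.length_cons, Walk.length_nil] at h4
        have h5 : (T.treePath u z).length = 0 := by
          rw [hzu, treePath_self]
          rfl
        omega
      · -- extend the path, contradicting maximality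
        have hq : (((T.treePath u z)).concat hy).IsPath :=
          isPath_concat (T.treePath_isPath u z) hy hnot
        have hyS : y ∈ S := by
          refine ⟨(T.treePath u z).concat hy, ?_⟩
          rw [support_concat]
          intro hc
          rcases List.mem_append.mp hc with hc | hc
          · exact hvp hc
          · rw [List.mem_singleton] at hc
            exact hyv hc.symm
        have h4 := hmax y hyS
        rw [← path_eq T _ hq, Walk.length_concat] at h4
        omega
    -- two distinct neighbors of z
    have h2 : 1 < (T.tree.neighborSet z).ncard := by omega
    obtain ⟨y₁, y₂, hy₁, hy₂, hne⟩ := (Set.one_lt_ncard_iff (Set.toFinite _)).mp h2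
    have ha₁ : T.tree.Adj z y₁ := hy₁
    have ha₂ : T.tree.Adj z y₂ := hy₂
    have hm₁ := claim1 y₁ ha₁
    have hm₂ := claim1 y₂ ha₂
    have penult : ∀ y (hy : T.tree.Adj z y) (hmem : y ∈ (T.treePath u z).support),
        T.treePath u z = ((T.treePath u z).takeUntil y hmem).concat hy.symm := by
      intro y hy hmem
      have hq : (((T.treePath u z).takeUntil y hmem).concat hy.symm).IsPath :=
        isPath_concat ((T.treePath_isPath u z).takeUntil hmem) hy.symm
          (end_not_mem_takeUntil hmem hy.ne')
      exact (path_eq T _ hq).symm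
    have e₁ := penult y₁ ha₁ hm₁
    have e₂ := penult y₂ ha₂ hm₂
    have e3 : (((T.treePath u z).takeUntil y₁ hm₁).concat ha₁.symm).reverse
        = (((T.treePath u z).takeUntil y₂ hm₂).concat ha₂.symm).reverse := by
      rw [← e₁, ← e₂]
    rw [reverse_concat, reverse_concat] at e3
    have hs := congrArg Walk.support e3
    rw [Walk.support_cons, Walk.support_cons] at hs
    have h6 : (((T.treePath u z).takeUntil y₁ hm₁).reverse).support
        = (((T.treePath u z).takeUntil y₂ hm₂).reverse).support := by simpa using hs
    rw [support_eq_cons (((T.treePath u z).takeUntil y₁ hm₁).reverse),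
      support_eq_cons (((T.treePath u z).takeUntil y₂ hm₂).reverse)] at h6
    simp at h6
    exact hne h6.1
  rw [T.leaf_iff z] at hdeg
  obtain ⟨a, haX, haz⟩ := hdeg
  exact ⟨a, haX, Reach.symm (haz ▸ hz')⟩

end XTreeAux
namespace XTreeAux

open SimpleGraph SimpleGraph.Walk XTree
open scoped Classical

variable {α : Type} {X : Set α} {T : XTree α X}

lemma sideSet_eq_compSet {v u : T.V} (h : T.tree.Adj v u) :
    T.sideSet s(v, u) u = T.compSet v u := by
  ext a
  constructor
  · rintro ⟨haX, hreach⟩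
    obtain ⟨p'⟩ := hreach
    set q : (T.tree.deleteEdges {s(v, u)}).Walk (T.ι a) u := p'.toPath.1 with hq
    have hp'path : q.IsPath := p'.toPath.2
    have hsub : ∀ e ∈ q.edges, e ∈ T.tree.edgeSet := by
      intro e he
      have := q.edges_subset_edgeSet he
      rw [edgeSet_deleteEdges] at this
      exact this.1
    have hnotin : s(v, u) ∉ q.edges := by
      intro he
      have := q.edges_subset_edgeSet he
      rw [edgeSet_deleteEdges] at this
      exact this.2 rfl
    have hqT : (q.transfer T.tree hsub).IsPath := hp'path.transfer hsub
    have hqe := path_eq T _ hqT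
    refine ⟨haX, reach_iff.mpr ?_⟩
    intro hv
    have hdrop : (T.treePath (T.ι a) u).dropUntil v hv = Walk.cons h Walk.nil := by
      have h1 : (Walk.cons h Walk.nil : T.tree.Walk v u).IsPath := by
        rw [Walk.isPath_def]
        simp [h.ne]
      exact (path_eq T _ ((T.treePath_isPath (T.ι a) u).dropUntil hv)).trans
        (path_eq T _ h1).symm
    have he1 : s(v, u) ∈ ((T.treePath (T.ι a) u).dropUntil v hv).edges := by
      rw [hdrop]
      simp
    have he2 := (T.treePath (T.ι a) u).edges_dropUntil_subset hv he1
    rw [← hqe] at he2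
    rw [edges_transfer] at he2
    exact hnotin he2
  · rintro ⟨haX, hreach⟩
    have hv : v ∉ (T.treePath (T.ι a) u).support := reach_iff.mp hreach
    have hne : ∀ e ∈ (T.treePath (T.ι a) u).edges, e ∉ ({s(v, u)} : Set (Sym2 T.V)) := by
      intro e he hmem
      rw [Set.mem_singleton_iff] at hmem
      subst hmem
      exact hv ((T.treePath (T.ι a) u).fst_mem_support_of_mem_edges he)
    exact ⟨haX, ⟨(T.treePath (T.ι a) u).toDeleteEdges _ hne⟩⟩

lemma clus_form {A : Set α} (hA : A ∈ XTree.clus T) :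
    ∃ v u, T.tree.Adj v u ∧ A = T.compSet v u := by
  obtain ⟨e, he, u, hu, rfl⟩ := hA
  obtain ⟨b, rfl⟩ := Sym2.mem_iff_exists.mp hu
  rw [SimpleGraph.mem_edgeSet] at he
  refine ⟨b, u, he.symm, ?_⟩
  rw [← sideSet_eq_compSet he.symm, Sym2.eq_swap]

end XTreeAux
namespace XTreeAux

open SimpleGraph SimpleGraph.Walk XTree
open scoped Classical

variable {α : Type} {X : Set α} {T : XTree α X}

lemma case_a {v u v' u' : T.V} (h : T.tree.Adj v u) (h' : T.tree.Adj v' u')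
    (hnr : ¬ Reach T v u v') {b₀ : α} (hb₀B : b₀ ∈ T.compSet v' u')
    (hb₀A : b₀ ∈ T.compSet v u) : T.compSet v u ⊆ T.compSet v' u' := by
  have claim1 : ∀ a ∈ T.compSet v u, Reach T v' (T.ι a) u := by
    rintro a ⟨haX, hra⟩
    by_cases hv' : v' ∈ (T.treePath (T.ι a) u).support
    · exact absurd (Reach.symm (Reach.split hra hv').2) hnr
    · exact reach_iff.mpr hv'
  have huu' : Reach T v' u u' :=
    Reach.trans (Reach.symm (claim1 b₀ hb₀A)) hb₀B.2
  rintro a ⟨haX, hra⟩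
  exact ⟨haX, Reach.trans (claim1 a ⟨haX, hra⟩) huu'⟩

lemma case_b_notreach (hT : T.IsFullyResolved) {v u v' u' : T.V}
    (h : T.tree.Adj v u) (h' : T.tree.Adj v' u') (hvv' : v ≠ v')
    (hr1 : Reach T v u v') (hr2 : Reach T v' u' v)
    (hsub : T.compSet v' u' ⊆ T.compSet v u) : False := by
  rcases degree_cases hT v with h1 | h3
  · -- v is a leaf with label c
    rw [T.leaf_iff v] at h1
    obtain ⟨c, hcX, hcv⟩ := h1
    have hcB : c ∈ T.compSet v' u' := ⟨hcX, by rw [hcv]; exact Reach.symm hr2⟩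
    have hcA := hsub hcB
    exact (Reach.ne_left hcA.2) (by rw [hcv])
  · obtain ⟨n, hn, hnu⟩ := exists_other h3 h
    obtain ⟨x, hxX, hxr⟩ := compSet_nonempty hT hn
    have hxA : x ∉ T.compSet v u := by
      rintro ⟨-, hxu⟩
      have hxu' : Reach T v (T.ι x) u := hxu
      exact not_reach_sibling h hn hnu.symm
        (Reach.trans (Reach.symm hxu') hxr)
    have hxv : Reach T v' (T.ι x) v := by
      by_cases hv' : v' ∈ (T.treePath (T.ι x) v).support
      · exfalso
        have hx1 : Reach T v (T.ι x) v' := reach_endpoint hv' hvv'.symm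
        have hx2 : Reach T v n v' := Reach.trans (Reach.symm hxr) hx1
        exact not_reach_sibling h hn hnu.symm
          (Reach.symm (Reach.trans hx2 (Reach.symm hr1)))
      · exact reach_iff.mpr hv'
    have hxB : x ∈ T.compSet v' u' := ⟨hxX, Reach.trans hxv (Reach.symm hr2)⟩
    exact hxA (hsub hxB)

lemma case_b_reach (hT : T.IsFullyResolved) {v u v' u' : T.V}
    (h : T.tree.Adj v u) (h' : T.tree.Adj v' u') (hvv' : v ≠ v')
    (hr1 : Reach T v u v') (hr2 : ¬ Reach T v' u' v)
    (he : T.compSet v u = T.compSet v' u') : False := by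
  rcases degree_cases hT v' with h1 | h3
  · rw [T.leaf_iff v'] at h1
    obtain ⟨c, hcX, hcv⟩ := h1
    have hcA : c ∈ T.compSet v u := ⟨hcX, by rw [hcv]; exact Reach.symm hr1⟩
    rw [he] at hcA
    exact (Reach.ne_left hcA.2) (by rw [hcv])
  · obtain ⟨m, hm, hmv⟩ := exists_adj_reach hvv'.symm
    have hmu' : m ≠ u' := by
      rintro rfl
      exact hr2 hmv
    obtain ⟨n, hn, hnu', hnm⟩ := exists_third (u := u') (m := m) h3
    obtain ⟨x, hxX, hxr⟩ := compSet_nonempty hT hn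
    have hxB : x ∉ T.compSet v' u' := by
      rintro ⟨-, hxu⟩
      have hxu' : Reach T v' (T.ι x) u' := hxu
      exact not_reach_sibling hn h' hnu'
        (Reach.trans (Reach.symm hxr) hxu')
    have hxv' : Reach T v (T.ι x) v' := by
      by_cases hv : v ∈ (T.treePath (T.ι x) v').support
      · exfalso
        have hx1 : Reach T v' (T.ι x) v := reach_endpoint hv hvv'
        have hx2 : Reach T v' n v := Reach.trans (Reach.symm hxr) hx1
        exact not_reach_sibling hn hm hnm (Reach.trans hx2 (Reach.symm hmv))
      · exact reach_iff.mpr hv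
    have hxA : x ∈ T.compSet v u := ⟨hxX, Reach.trans hxv' (Reach.symm hr1)⟩
    rw [he] at hxA
    exact hxB hxA

lemma key_a (hT : T.IsFullyResolved) {v u v' u' : T.V}
    (h : T.tree.Adj v u) (h' : T.tree.Adj v' u') (hvv' : v ≠ v')
    (hr1 : ¬ Reach T v u v') (hr2 : ¬ Reach T v' u' v)
    (he : T.compSet v u = T.compSet v' u') : False := by
  haveI := T.fintypeV
  have hv'u : v' ≠ u := by
    rintro rfl
    exact hr1 (reach_self h.ne')
  have hvu' : v ≠ u' := by
    rintro rfl
    exact hr2 (reach_self h'.ne')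
  obtain ⟨a₀, ha₀X, ha₀r⟩ := compSet_nonempty hT h
  have ha₀A : a₀ ∈ T.compSet v u := ⟨ha₀X, ha₀r⟩
  have ha₀B : a₀ ∈ T.compSet v' u' := he ▸ ha₀A
  have claim1 : ∀ a ∈ T.compSet v u, Reach T v' (T.ι a) u := by
    rintro a ⟨haX, hra⟩
    by_cases hv2 : v' ∈ (T.treePath (T.ι a) u).support
    · exact absurd (Reach.symm (Reach.split hra hv2).2) hr1
    · exact reach_iff.mpr hv2
  have huu' : Reach T v' u u' :=
    Reach.trans (Reach.symm (claim1 a₀ ha₀A)) ha₀B.2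
  obtain ⟨n, hn, hnv'⟩ := exists_adj_reach hvv'
  have hnu : n ≠ u := by
    rintro rfl
    exact hr1 hnv'
  have h3 : (T.tree.neighborSet v).ncard = 3 := by
    rcases degree_cases hT v with h1 | h3
    · exfalso
      have : 1 < (T.tree.neighborSet v).ncard :=
        (Set.one_lt_ncard_iff (Set.toFinite _)).mpr ⟨n, u, hn, h, hnu⟩
      omega
    · exact h3
  obtain ⟨n'', hn'', hn''u, hn''n⟩ := exists_third (u := u) (m := n) h3
  obtain ⟨x, hxX, hxr⟩ := compSet_nonempty hT hn''
  have hxA : x ∉ T.compSet v u := by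
    rintro ⟨-, hxu⟩
    have hxu' : Reach T v (T.ι x) u := hxu
    exact not_reach_sibling h hn'' hn''u.symm
      (Reach.trans (Reach.symm hxu') hxr)
  have hxv : Reach T v' (T.ι x) v := by
    by_cases hv2 : v' ∈ (T.treePath (T.ι x) v).support
    · exfalso
      have hx1 : Reach T v (T.ι x) v' := reach_endpoint hv2 hvv'.symm
      have hx2 : Reach T v n'' v' := Reach.trans (Reach.symm hxr) hx1
      exact not_reach_sibling hn hn'' hn''n.symm
        (Reach.trans hnv' (Reach.symm hx2))
    · exact reach_iff.mpr hv2
  have hvu : Reach T v' v u := by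
    rw [reach_iff]
    have hcons : (Walk.cons h Walk.nil : T.tree.Walk v u).IsPath := by
      rw [Walk.isPath_def]
      simp [h.ne]
    rw [← path_eq T _ hcons]
    simp only [Walk.support_cons, Walk.support_nil]
    intro hc
    rcases List.mem_cons.mp hc with hc | hc
    · exact hvv'.symm hc
    · rw [List.mem_singleton] at hc
      exact hv'u hc
  have hxB : x ∈ T.compSet v' u' :=
    ⟨hxX, Reach.trans (Reach.trans hxv hvu) huu'⟩
  rw [← he] at hxB
  exact hxA hxB

/-- A compSet determines its defining adjacent pair. -/
lemma witness_unique (hT : T.IsFullyResolved) {v u v' u' : T.V}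
    (h : T.tree.Adj v u) (h' : T.tree.Adj v' u')
    (he : T.compSet v u = T.compSet v' u') : v = v' ∧ u = u' := by
  have hvv' : v = v' := by
    by_contra hvv'
    by_cases hr1 : Reach T v u v' <;> by_cases hr2 : Reach T v' u' v
    · exact case_b_notreach hT h h' hvv' hr1 hr2 he.symm.le
    · exact case_b_reach hT h h' hvv' hr1 hr2 he
    · exact case_b_reach hT h' h (Ne.symm hvv') hr2 hr1 he.symm
    · exact key_a hT h h' hvv' hr1 hr2 he
  subst hvv'
  refine ⟨rfl, ?_⟩
  by_contra huu'
  obtain ⟨a₀, ha₀X, ha₀r⟩ := compSet_nonempty hT h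
  have ha₀B : a₀ ∈ T.compSet v u' := he ▸ ⟨ha₀X, ha₀r⟩
  exact not_reach_sibling h h' huu' (Reach.trans (Reach.symm ha₀r) ha₀B.2)

/-- The stability distance formula. -/
lemma stab (hT : T.IsFullyResolved) (w : Sym2 T.V → ℝ) {v u v' u' : T.V}
    (h : T.tree.Adj v u) (h' : T.tree.Adj v' u')
    (hsub : T.compSet v' u' ⊆ T.compSet v u)
    (hne : T.compSet v u ≠ T.compSet v' u')
    {b₀ : α} (hb₀ : b₀ ∈ T.compSet v' u') :
    ∀ b ∈ T.compSet v' u',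
      T.pathDist w (T.ι b) v = T.pathDist w (T.ι b) v' + T.pathDist w v' v := by
  have hr1 : Reach T v u v' := by
    by_contra hnr
    exact hne (le_antisymm (case_a h h' hnr hb₀ (hsub hb₀)) hsub)
  have hvv' : v ≠ v' := by
    rintro rfl
    have huu' : u ≠ u' := by
      rintro rfl
      exact hne rfl
    exact not_reach_sibling h h' huu'
      (Reach.trans (Reach.symm (hsub hb₀).2) hb₀.2)
  have hr2 : ¬ Reach T v' u' v := fun hr2 =>
    case_b_notreach hT h h' hvv' hr1 hr2 hsub
  intro b hbB
  have hv' : v' ∈ (T.treePath (T.ι b) v).support := by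
    by_contra hv'
    exact hr2 (Reach.symm (Reach.trans (Reach.symm (reach_iff.mpr hv' :
      Reach T v' (T.ι b) v)) hbB.2))
  exact pathDist_split w hv'
end XTreeAux
namespace XTreeAux

open SimpleGraph SimpleGraph.Walk XTree
open scoped Classical

variable {α : Type} {X : Set α}

noncomputable def wfmin (S : Set α) (h : S.Nonempty) : α :=
  (IsWellFounded.wf (r := @WellOrderingRel α)).min S h

lemma wfmin_mem (S : Set α) (h : S.Nonempty) : wfmin S h ∈ S :=
  WellFounded.min_mem _ S h

lemma wfmin_not_lt {S : Set α} {x : α} (h : S.Nonempty) (hx : x ∈ S) :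
    ¬ WellOrderingRel x (wfmin S h) :=
  WellFounded.not_lt_min _ S hx

lemma wfmin_mono {S S' : Set α} (hS' : S' ⊆ S) (hne' : S'.Nonempty) (hne : S.Nonempty)
    (hmem : wfmin S hne ∈ S') : wfmin S' hne' = wfmin S hne := by
  rcases trichotomous_of WellOrderingRel (wfmin S' hne') (wfmin S hne) with h | h | h
  · exact absurd h (wfmin_not_lt hne (hS' (wfmin_mem S' hne')))
  · exact h
  · exact absurd h (wfmin_not_lt hne' hmem)

variable {T : XTree α X}

/-- The set of leaves of the component minimizing distance to `v`. -/
def Mset (T : XTree α X) (w : Sym2 T.V → ℝ) (v u : T.V) : Set α :=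
  {a ∈ T.compSet v u | ∀ b ∈ T.compSet v u,
    T.pathDist w (T.ι a) v ≤ T.pathDist w (T.ι b) v}

lemma Mset_nonempty (hT : T.IsFullyResolved) (w : Sym2 T.V → ℝ) (hfin : X.Finite)
    {v u : T.V} (h : T.tree.Adj v u) : (Mset T w v u).Nonempty := by
  obtain ⟨a, haX, har⟩ := compSet_nonempty hT h
  obtain ⟨b, hb, hbmin⟩ := Set.exists_min_image (T.compSet v u)
    (fun a => T.pathDist w (T.ι a) v) (hfin.subset compSet_subset) ⟨a, haX, har⟩
  exact ⟨b, hb, hbmin⟩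

/-- The canonical stable transversal. -/
noncomputable def pick (T : XTree α X) (w : Sym2 T.V → ℝ) (d : α) (A : Set α) : α :=
  if h : ∃ p : T.V × T.V, T.tree.Adj p.1 p.2 ∧ A = T.compSet p.1 p.2 then
    if hM : (Mset T w h.choose.1 h.choose.2).Nonempty then wfmin _ hM else d
  else d

lemma pick_eq (hT : T.IsFullyResolved) (w : Sym2 T.V → ℝ) (hfin : X.Finite) (d : α)
    {v u : T.V} (h : T.tree.Adj v u) :
    ∃ hne : (Mset T w v u).Nonempty, pick T w d (T.compSet v u) = wfmin _ hne := by
  have hEx : ∃ p : T.V × T.V, T.tree.Adj p.1 p.2 ∧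
      T.compSet v u = T.compSet p.1 p.2 := ⟨(v, u), h, rfl⟩
  obtain ⟨hadj, hAeq⟩ := hEx.choose_spec
  obtain ⟨hv, hu⟩ := witness_unique hT h hadj hAeq
  have hMeq : Mset T w hEx.choose.1 hEx.choose.2 = Mset T w v u := by
    rw [← hv, ← hu]
  refine ⟨Mset_nonempty hT w hfin h, ?_⟩
  unfold pick
  rw [dif_pos hEx]
  have hM1 : (Mset T w hEx.choose.1 hEx.choose.2).Nonempty := by
    rw [hMeq]
    exact Mset_nonempty hT w hfin h
  rw [dif_pos hM1]
  congr 1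

lemma pick_mem (hT : T.IsFullyResolved) (w : Sym2 T.V → ℝ) (hfin : X.Finite) (d : α)
    {v u : T.V} (h : T.tree.Adj v u) :
    pick T w d (T.compSet v u) ∈ Mset T w v u := by
  obtain ⟨hne, heq⟩ := pick_eq hT w hfin d h
  rw [heq]
  exact wfmin_mem _ hne

/-- `pick` is a stable transversal of the clusters. -/
lemma pick_stable (hT : T.IsFullyResolved) (w : Sym2 T.V → ℝ) (hfin : X.Finite) (d : α) :
    XTree.IsStableTransversal (XTree.clus T) (pick T w d) := by
  constructor
  · intro A hA
    obtain ⟨v, u, h, rfl⟩ := clus_form hA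
    exact (pick_mem hT w hfin d h).1
  · intro A hA B hB hfAB hBA
    by_cases hAB : A = B
    · rw [hAB]
    obtain ⟨v, u, h, rfl⟩ := clus_form hA
    obtain ⟨v', u', h', rfl⟩ := clus_form hB
    have hdist := stab hT w h h' hBA hAB hfAB
    obtain ⟨hneA, heqA⟩ := pick_eq hT w hfin d h
    obtain ⟨hneB, heqB⟩ := pick_eq hT w hfin d h'
    set fA := pick T w d (T.compSet v u) with hfA
    have hfAmem : fA ∈ Mset T w v u := by
      rw [heqA]
      exact wfmin_mem _ hneA
    have hfAMB : fA ∈ Mset T w v' u' := by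
      refine ⟨hfAB, ?_⟩
      intro b hb
      have h1 := hdist fA hfAB
      have h2 := hdist b hb
      have h3 := hfAmem.2 b (hBA hb)
      linarith
    have hsub : Mset T w v' u' ⊆ Mset T w v u := by
      rintro b ⟨hbB, hbmin⟩
      refine ⟨hBA hbB, ?_⟩
      intro a ha
      have h1 := hdist b hbB
      have h2 := hdist fA hfAB
      have h3 := hbmin fA hfAB
      have h4 := hfAmem.2 a ha
      linarith
    rw [heqB, heqA]
    exact (wfmin_mono hsub hneB hneA (by rw [← heqA]; exact hfAMB)).symm

end XTreeAux

open XTree in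
/-- Let `T` be a fully-resolved `X`-tree with a proper edge-weighting
`w`, and suppose `L ⊆ binom(X,2)` contains, for every interior vertex `v` of `T`, every
cord `xy` such that `x` is a leaf at minimum weighted path distance to `v` in one
component of `T - v` and `y` is a leaf at minimum weighted path distance to `v` in
another component of `T - v`. Then `L` contains a stable triplet cover for `T`. -/
theorem contains_stable_triplet_cover {α : Type} (X : Set α) (hfin : X.Finite)
    (hcard : 3 ≤ X.ncard) (T : XTree α X) (hT : T.IsFullyResolved)
    (w : Sym2 T.V → ℝ) (hw : T.IsProperWeighting w)
    (L : Set (Sym2 α))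
    (hL : ∀ v : T.V, T.IsInterior v →
      ∀ u₁ u₂ : T.V, T.tree.Adj v u₁ → T.tree.Adj v u₂ → u₁ ≠ u₂ →
        ∀ a ∈ T.compSet v u₁, ∀ b ∈ T.compSet v u₂,
          (∀ a' ∈ T.compSet v u₁, T.pathDist w (T.ι a) v ≤ T.pathDist w (T.ι a') v) →
          (∀ b' ∈ T.compSet v u₂, T.pathDist w (T.ι b) v ≤ T.pathDist w (T.ι b') v) →
          s(a, b) ∈ L) :
    ∃ L' ⊆ L, IsStableTripletCover T L' := by
  classical
  obtain ⟨d, hd⟩ := Set.nonempty_of_ncard_ne_zero (by omega : X.ncard ≠ 0)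
  refine ⟨XTree.tripletCoverOf T (XTreeAux.pick T w d), ?_, XTreeAux.pick T w d,
    XTreeAux.pick_stable hT w hfin d, rfl⟩
  rintro c ⟨v, u₁, u₂, hint, h1, h2, hne, rfl⟩
  have hm₁ := XTreeAux.pick_mem hT w hfin d h1
  have hm₂ := XTreeAux.pick_mem hT w hfin d h2
  exact hL v hint u₁ u₂ h1 h2 hne _ hm₁.1 _ hm₂.1 hm₁.2 hm₂.2
end
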